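/- arXiv:0807.1851 — 5 statements merged into one kernel-verified Lean document; each statement's English description precedes it below -/
import Mathlib

section
/- If J ∈ Mat(n,K) is invertible (n ≥ 1), then the center of the Lie algebra (Mat(n,K), [·,·]_J) is the one-dimensional subspace K·J^{−1}. -/
/-- If `J ∈ Mat(n,K)` is invertible (`n ≥ 1`), the center of
`(Mat(n,K), [·,·]_J)` is the one-dimensional subspace `K·J⁻¹`. -/
theorem stmt_6 (K : Type*) [Field K] [CharZero K] (n : ℕ) (hn : 1 ≤ n)
    (J : Matrix (Fin n) (Fin n) K) (hJ : IsUnit J) :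
    {A : Matrix (Fin n) (Fin n) K |
        ∀ B : Matrix (Fin n) (Fin n) K, A * J * B - B * J * A = 0} =
      Set.range (fun c : K => c • J⁻¹) := by
  have hJi : J⁻¹ * J = 1 := Matrix.nonsing_inv_mul J ((Matrix.isUnit_iff_isUnit_det J).mp hJ)
  have hJi' : J * J⁻¹ = 1 := Matrix.mul_nonsing_inv J ((Matrix.isUnit_iff_isUnit_det J).mp hJ)
  ext A
  simp only [Set.mem_setOf_eq, Set.mem_range]
  constructor
  · intro h
    have hcomm : ∀ B, Commute B (A * J) := by
      intro B
      have h1 := h 1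
      have h2 := h B
      have hAJ : A * J = J * A := by
        have := h 1
        simpa [sub_eq_zero] using this
      rw [sub_eq_zero] at h2
      unfold Commute SemiconjBy
      calc B * (A * J) = B * (J * A) := by rw [hAJ]
        _ = A * J * B := by rw [← Matrix.mul_assoc, ← h2]
    obtain ⟨c, hc⟩ := Matrix.mem_range_scalar_of_commute_single
      (fun i j _ => hcomm _)
    refine ⟨c, ?_⟩
    have : A * J * J⁻¹ = (Matrix.scalar (Fin n) c) * J⁻¹ := by rw [hc]
    rw [Matrix.mul_assoc, hJi', Matrix.mul_one] at this
    rw [this]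
    rw [Matrix.scalar_apply, ← Matrix.smul_one_eq_diagonal, Matrix.smul_mul, Matrix.one_mul]
  · rintro ⟨c, rfl⟩ B
    rw [Matrix.smul_mul, Matrix.smul_mul, Matrix.mul_smul, hJi, Matrix.one_mul,
      Matrix.mul_assoc, hJi', Matrix.mul_one, sub_self]
end

section
/- For 0 ≤ r < n, the center of the Lie algebra (Mat(n,K), [·,·]_{J_{n,r}}) consists exactly of the block matrices [[0,0],[0,A₄]] with A₄ ∈ Mat(n−r, K); in particular the center has dimension (n−r)². -/
/-- The linear map embedding `Mat(s,K)` as the bottom-right block. -/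
def cornerMap (K : Type*) [Field K] (r s : ℕ) :
    Matrix (Fin s) (Fin s) K →ₗ[K] Matrix (Fin r ⊕ Fin s) (Fin r ⊕ Fin s) K where
  toFun A₄ := Matrix.fromBlocks 0 0 0 A₄
  map_add' A B := by
    rw [Matrix.fromBlocks_add]; simp
  map_smul' c A := by
    simp only [RingHom.id_apply]
    rw [Matrix.fromBlocks_smul]; simp

theorem cornerMap_inj (K : Type*) [Field K] (r s : ℕ) :
    Function.Injective (cornerMap K r s) := by
  intro a b hab
  have := congrArg Matrix.toBlocks₂₂ hab
  simpa [cornerMap] using this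

/-- For `0 ≤ r < n` (here `n = r + s` with `s ≥ 1`), the center of
`(Mat(n,K), [·,·]_{J_{n,r}})` consists exactly of the block matrices
`[[0,0],[0,A₄]]`, and it has dimension `(n-r)² = s²`. -/
theorem stmt_7 (K : Type*) [Field K] (r s : ℕ) (hs : 1 ≤ s) :
    let J : Matrix (Fin r ⊕ Fin s) (Fin r ⊕ Fin s) K := Matrix.fromBlocks 1 0 0 0
    ({A : Matrix (Fin r ⊕ Fin s) (Fin r ⊕ Fin s) K |
        ∀ B, A * J * B - B * J * A = 0} =
      {A | ∃ A₄ : Matrix (Fin s) (Fin s) K, A = Matrix.fromBlocks 0 0 0 A₄}) ∧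
    Module.finrank K
      (Submodule.span K {A : Matrix (Fin r ⊕ Fin s) (Fin r ⊕ Fin s) K |
        ∀ B, A * J * B - B * J * A = 0}) = s ^ 2 := by
  intro J
  have hset : {A : Matrix (Fin r ⊕ Fin s) (Fin r ⊕ Fin s) K |
        ∀ B, A * J * B - B * J * A = 0} =
      {A | ∃ A₄ : Matrix (Fin s) (Fin s) K, A = Matrix.fromBlocks 0 0 0 A₄} := by
    ext A
    simp only [Set.mem_setOf_eq]
    constructor
    · intro h
      set A₁ := A.toBlocks₁₁ with hA₁
      set A₂ := A.toBlocks₁₂ with hA₂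
      set A₃ := A.toBlocks₂₁ with hA₃
      set A₄ := A.toBlocks₂₂ with hA₄
      have hA : A = Matrix.fromBlocks A₁ A₂ A₃ A₄ := (Matrix.fromBlocks_toBlocks A).symm
      -- From B = 1 : A * J = J * A
      have h1 : A * J = J * A := by
        have := h 1
        rw [sub_eq_zero] at this
        simpa using this
      have hAJ : A * J = Matrix.fromBlocks A₁ 0 A₃ 0 := by
        rw [hA, Matrix.fromBlocks_multiply]; simp
      have hJA : J * A = Matrix.fromBlocks A₁ A₂ 0 0 := by
        rw [hA, Matrix.fromBlocks_multiply]; simp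
      rw [hAJ, hJA] at h1
      have h2 : A₂ = 0 := by
        have := congrArg Matrix.toBlocks₁₂ h1
        simpa using this.symm
      have h3 : A₃ = 0 := by
        have := congrArg Matrix.toBlocks₂₁ h1
        simpa using this
      -- Now show A₁ = 0 using B = fromBlocks 0 0 B₃ 0
      have h1zero : A₁ = 0 := by
        ext p q
        set i0 : Fin s := ⟨0, hs⟩
        set B₃ : Matrix (Fin s) (Fin r) K := fun _ k => if k = p then 1 else 0 with hB₃
        set B : Matrix (Fin r ⊕ Fin s) (Fin r ⊕ Fin s) K :=
          Matrix.fromBlocks 0 0 B₃ 0 with hB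
        have hb := h B
        have hAJB : A * J * B = 0 := by
          rw [hAJ, hB, Matrix.fromBlocks_multiply]; simp
        have hBJA : B * J * A = Matrix.fromBlocks 0 0 (B₃ * A₁) (B₃ * A₂) := by
          have hBJ : B * J = Matrix.fromBlocks 0 0 B₃ 0 := by
            rw [hB, Matrix.fromBlocks_multiply]; simp
          rw [hBJ, hA, Matrix.fromBlocks_multiply]; simp
        rw [hAJB, hBJA, zero_sub, neg_eq_zero] at hb
        have hb21 : B₃ * A₁ = 0 := by
          have := congrArg Matrix.toBlocks₂₁ hb
          simpa using this.trans (by ext i j; rfl)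
        have := congrFun (congrFun hb21 i0) q
        simp only [Matrix.mul_apply, hB₃, Matrix.zero_apply] at this
        change (Matrix.of (fun (_ : Fin s) (k : Fin r) => if k = p then (1 : K) else 0) * A₁) i0 q = 0 at this
        simpa [Matrix.mul_apply] using this
      refine ⟨A₄, ?_⟩
      rw [hA, h1zero, h2, h3]
    · rintro ⟨A₄, rfl⟩ B
      have hAJ : Matrix.fromBlocks (0 : Matrix (Fin r) (Fin r) K) 0 0 A₄ * J = 0 := by
        rw [Matrix.fromBlocks_multiply]; simp
      have hJA : J * Matrix.fromBlocks (0 : Matrix (Fin r) (Fin r) K) 0 0 A₄ = 0 := by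
        rw [Matrix.fromBlocks_multiply]; simp
      rw [hAJ, Matrix.mul_assoc, hJA]
      simp
  refine ⟨hset, ?_⟩
  have hrange : {A : Matrix (Fin r ⊕ Fin s) (Fin r ⊕ Fin s) K |
        ∀ B, A * J * B - B * J * A = 0} = Set.range (cornerMap K r s) := by
    rw [hset]
    ext A
    simp only [Set.mem_setOf_eq, Set.mem_range, cornerMap, LinearMap.coe_mk, AddHom.coe_mk]
    exact ⟨fun ⟨A₄, h⟩ => ⟨A₄, h.symm⟩, fun ⟨A₄, h⟩ => ⟨A₄, h.symm⟩⟩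
  rw [hrange, ← LinearMap.coe_range, Submodule.span_eq,
    LinearMap.finrank_range_of_inj (cornerMap_inj K r s)]
  rw [Module.finrank_matrix]
  simp [sq]
end

section
/- There is no faithful Lie algebra homomorphism from the (2n+1)-dimensional Heisenberg Lie algebra H_n into gl(V) for a vector space V over a field of characteristic zero with dim V ≤ n+1. Equivalently, any Lie algebra homomorphism ρ: H_n → gl(r, K) with r ≤ n+1 has nonzero kernel. -/
open Module Matrix

section Aux

variable {K : Type*} [Field K]

/-- An isotropic subspace of the standard symplectic space `K^m × K^m`
has dimension at most `m`. -/
lemma stmt14_iso_bound (m : ℕ)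
    (B : Submodule K ((Fin m → K) × (Fin m → K)))
    (h : ∀ u ∈ B, ∀ w ∈ B, u.1 ⬝ᵥ w.2 = w.1 ⬝ᵥ u.2) :
    finrank K B ≤ m := by
  let ω : ((Fin m → K) × (Fin m → K)) →ₗ[K] ((Fin m → K) × (Fin m → K)) →ₗ[K] K :=
    LinearMap.mk₂ K
    (fun u w => u.1 ⬝ᵥ w.2 - w.1 ⬝ᵥ u.2)
    (by intro u u' w; simp only [Prod.fst_add, Prod.snd_add, add_dotProduct, dotProduct_add]; ring)
    (by intro c u w; simp only [Prod.smul_fst, Prod.smul_snd, smul_dotProduct, dotProduct_smul,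
      smul_eq_mul]; ring)
    (by intro u w w'; simp only [Prod.fst_add, Prod.snd_add, add_dotProduct, dotProduct_add]; ring)
    (by intro c u w; simp only [Prod.smul_fst, Prod.smul_snd, smul_dotProduct, dotProduct_smul,
      smul_eq_mul]; ring)
  have hinj : Function.Injective ω := by
    rw [← LinearMap.ker_eq_bot, LinearMap.ker_eq_bot']
    intro u hu
    have h1 : ∀ i, u.1 i = 0 := by
      intro i
      have h2 : ω u (0, Pi.single i 1) = 0 := by rw [hu]; rfl
      simpa [ω, LinearMap.mk₂_apply, dotProduct_single] using h2
    have h2 : ∀ i, u.2 i = 0 := by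
      intro i
      have h2 : ω u (Pi.single i 1, 0) = 0 := by rw [hu]; rfl
      simpa [ω, LinearMap.mk₂_apply, single_dotProduct] using h2
    ext i
    · exact h1 i
    · exact h2 i
  have hle : B ≤ Submodule.comap ω B.dualAnnihilator := by
    intro u hu
    simp only [Submodule.mem_comap, Submodule.mem_dualAnnihilator]
    intro w hw
    simp [ω, LinearMap.mk₂_apply, h u hu w hw]
  have e1 : finrank K B ≤ finrank K (Submodule.comap ω B.dualAnnihilator) :=
    Submodule.finrank_mono hle
  have e2 : finrank K (Submodule.comap ω B.dualAnnihilator)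
      = finrank K (Submodule.map ω (Submodule.comap ω B.dualAnnihilator)) :=
    (Submodule.equivMapOfInjective ω hinj _).finrank_eq
  have e3 : finrank K (Submodule.map ω (Submodule.comap ω B.dualAnnihilator))
      ≤ finrank K B.dualAnnihilator :=
    Submodule.finrank_mono (Submodule.map_comap_le _ _)
  have e4 : finrank K B.dualAnnihilator
      = finrank K (((Fin m → K) × (Fin m → K)) ⧸ B) :=
    (Subspace.quotEquivAnnihilator B).symm.finrank_eq
  have e5 : finrank K (((Fin m → K) × (Fin m → K)) ⧸ B) + finrank K B
      = finrank K ((Fin m → K) × (Fin m → K)) :=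
    Submodule.finrank_quotient_add_finrank B
  have e6 : finrank K ((Fin m → K) × (Fin m → K)) = m + m := by
    simp [Module.finrank_prod]
  omega

/-- A traceless matrix over a char-zero field all of whose vectors are
eigenvectors is zero. -/
lemma stmt14_scalar_lemma [CharZero K] {r : ℕ} (M : Matrix (Fin r) (Fin r) K)
    (htr : M.trace = 0) (h : ∀ v : Fin r → K, M *ᵥ v ∈ Submodule.span K {v}) :
    M = 0 := by
  rcases Nat.eq_zero_or_pos r with hr | hr
  · subst hr; ext i j; exact i.elim0
  have hoff : ∀ i j, i ≠ j → M i j = 0 := by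
    intro i j hij
    obtain ⟨c, hc⟩ := Submodule.mem_span_singleton.mp (h (Pi.single j 1))
    have := congrFun hc i
    simp [mulVec_single_one, Pi.single_apply, hij] at this
    exact this.symm
  have hdiag : ∀ i j : Fin r, M i i = M j j := by
    intro i j
    rcases eq_or_ne i j with rfl | hij
    · rfl
    obtain ⟨c, hc⟩ := Submodule.mem_span_singleton.mp
      (h (Pi.single i 1 + Pi.single j 1))
    have hvi := congrFun hc i
    have hvj := congrFun hc j
    simp [mulVec_add, mulVec_single_one, Pi.single_apply, hij, Ne.symm hij,
      transpose_apply] at hvi hvj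
    rw [hoff i j hij] at hvi
    rw [hoff j i (Ne.symm hij)] at hvj
    rw [add_zero] at hvi
    rw [zero_add] at hvj
    rw [← hvi, ← hvj]
  set i0 : Fin r := ⟨0, hr⟩
  have htr2 : (r : K) * M i0 i0 = 0 := by
    have : M.trace = ∑ _i : Fin r, M i0 i0 := by
      rw [Matrix.trace]
      exact Finset.sum_congr rfl fun i _ => hdiag i i0
    rw [this, Finset.sum_const, Finset.card_univ, Fintype.card_fin, nsmul_eq_mul] at htr
    exact htr
  have hz : M i0 i0 = 0 := by
    have hne : (r : K) ≠ 0 := Nat.cast_ne_zero.mpr hr.ne'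
    rcases mul_eq_zero.mp htr2 with h' | h'
    · exact absurd h' hne
    · exact h'
  ext i j
  rcases eq_or_ne i j with rfl | hij
  · rw [hdiag i i0, hz]; rfl
  · rw [hoff i j hij]; rfl

variable {n r : ℕ}
variable (X Y : Fin n → Matrix (Fin r) (Fin r) K) (Z : Matrix (Fin r) (Fin r) K)

/-- Cross-term commutator of linear combinations. -/
lemma stmt14_cross (hXY : ∀ i j, X i * Y j - Y j * X i = if i = j then Z else 0)
    (a b' : Fin n → K) :
    (∑ i, a i • X i) * (∑ j, b' j • Y j) - (∑ j, b' j • Y j) * (∑ i, a i • X i)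
      = (a ⬝ᵥ b') • Z := by
  have e1 : (∑ i, a i • X i) * (∑ j, b' j • Y j)
      = ∑ i, ∑ j, (a i * b' j) • (X i * Y j) := by
    rw [Finset.sum_mul]
    refine Finset.sum_congr rfl fun i _ => ?_
    rw [Finset.mul_sum]
    refine Finset.sum_congr rfl fun j _ => ?_
    rw [smul_mul_assoc, mul_smul_comm, smul_smul]
  have e2 : (∑ j, b' j • Y j) * (∑ i, a i • X i)
      = ∑ i, ∑ j, (a i * b' j) • (Y j * X i) := by
    rw [Finset.mul_sum]
    refine Finset.sum_congr rfl fun i _ => ?_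
    rw [Finset.sum_mul]
    refine Finset.sum_congr rfl fun j _ => ?_
    rw [smul_mul_assoc, mul_smul_comm, smul_smul, mul_comm (b' j) (a i)]
  rw [e1, e2, ← Finset.sum_sub_distrib]
  have e3 : ∀ i : Fin n, (∑ j, (a i * b' j) • (X i * Y j)) - ∑ j, (a i * b' j) • (Y j * X i)
      = (a i * b' i) • Z := by
    intro i
    rw [← Finset.sum_sub_distrib]
    have : ∀ j : Fin n, (a i * b' j) • (X i * Y j) - (a i * b' j) • (Y j * X i)
        = if j = i then (a i * b' j) • Z else 0 := by
      intro j
      rw [← smul_sub, hXY i j]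
      rcases eq_or_ne i j with rfl | hij
      · simp
      · simp [hij, Ne.symm hij]
    simp_rw [this]
    rw [Finset.sum_ite_eq' Finset.univ i (fun j => (a i * b' j) • Z)]
    simp
  simp_rw [e3]
  rw [dotProduct, Finset.sum_smul]

/-- The full commutator identity for the Heisenberg relations. -/
lemma stmt14_key (hXY : ∀ i j, X i * Y j - Y j * X i = if i = j then Z else 0)
    (hXX : ∀ i j, X i * X j = X j * X i)
    (hYY : ∀ i j, Y i * Y j = Y j * Y i)
    (hXZ : ∀ i, X i * Z = Z * X i)
    (hYZ : ∀ i, Y i * Z = Z * Y i)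
    (a b : Fin n → K) (c : K) (a' b' : Fin n → K) (c' : K) :
    (∑ i, a i • X i + ∑ j, b j • Y j + c • Z) * (∑ i, a' i • X i + ∑ j, b' j • Y j + c' • Z)
      - (∑ i, a' i • X i + ∑ j, b' j • Y j + c' • Z) * (∑ i, a i • X i + ∑ j, b j • Y j + c • Z)
      = (a ⬝ᵥ b' - a' ⬝ᵥ b) • Z := by
  set A := ∑ i, a i • X i with hA
  set B := ∑ j, b j • Y j with hB
  set A' := ∑ i, a' i • X i with hA'
  set B' := ∑ j, b' j • Y j with hB'
  have csum : ∀ (U V : Fin n → Matrix (Fin r) (Fin r) K) (u v : Fin n → K),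
      (∀ i j, Commute (U i) (V j)) →
      Commute (∑ i, u i • U i) (∑ j, v j • V j) := by
    intro U V u v hUV
    refine Commute.sum_left _ _ _ fun i _ => ?_
    refine Commute.sum_right _ _ _ fun j _ => ?_
    exact ((hUV i j).smul_left (u i)).smul_right (v j)
  have csumZ : ∀ (U : Fin n → Matrix (Fin r) (Fin r) K) (u : Fin n → K),
      (∀ i, Commute (U i) Z) → Commute (∑ i, u i • U i) Z := by
    intro U u hUZ
    refine Commute.sum_left _ _ _ fun i _ => ?_
    exact (hUZ i).smul_left (u i)
  have hAA' : A' * A = A * A' :=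
    ((csum X X a a' fun i j => hXX i j).symm).eq
  have hBB' : B' * B = B * B' :=
    ((csum Y Y b b' fun i j => hYY i j).symm).eq
  have hZA : Z * A = A * Z := ((csumZ X a fun i => hXZ i).eq).symm
  have hZA' : Z * A' = A' * Z := ((csumZ X a' fun i => hXZ i).eq).symm
  have hZB : Z * B = B * Z := ((csumZ Y b fun i => hYZ i).eq).symm
  have hZB' : Z * B' = B' * Z := ((csumZ Y b' fun i => hYZ i).eq).symm
  have hcross1 : B' * A = A * B' - (a ⬝ᵥ b') • Z := by
    have := stmt14_cross X Y Z hXY a b'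
    rw [← hA, ← hB'] at this
    rw [← this]; abel
  have hcross2 : B * A' = A' * B - (a' ⬝ᵥ b) • Z := by
    have := stmt14_cross X Y Z hXY a' b
    rw [← hA', ← hB] at this
    rw [← this]; abel
  simp only [add_mul, mul_add, smul_mul_assoc, mul_smul_comm, smul_smul]
  rw [hAA', hBB', hZA, hZA', hZB, hZB', hcross1, hcross2]
  module

end Aux

/-- There is no faithful representation of the `(2n+1)`-dimensional Heisenberg
Lie algebra on a space of dimension `r ≤ n+1` over a field of characteristic
zero: if matrices `X₁,…,Xₙ,Y₁,…,Yₙ,Z ∈ Mat(r,K)` satisfy the Heisenberg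
relations `[Xᵢ,Yⱼ] = δᵢⱼ Z`, `[Xᵢ,Xⱼ] = [Yᵢ,Yⱼ] = 0`, `Z` central, under the
usual commutator, then they cannot be linearly independent (so any Lie algebra
homomorphism `ρ : H_n → gl(r,K)` has nonzero kernel). -/
theorem stmt_14 (K : Type*) [Field K] [CharZero K] (n r : ℕ) (hn : 1 ≤ n)
    (hr : r ≤ n + 1)
    (X Y : Fin n → Matrix (Fin r) (Fin r) K) (Z : Matrix (Fin r) (Fin r) K)
    (hXY : ∀ i j, X i * Y j - Y j * X i = if i = j then Z else 0)
    (hXX : ∀ i j, X i * X j = X j * X i)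
    (hYY : ∀ i j, Y i * Y j = Y j * Y i)
    (hXZ : ∀ i, X i * Z = Z * X i)
    (hYZ : ∀ i, Y i * Z = Z * Y i) :
    ¬ LinearIndependent K (Sum.elim X (Sum.elim Y (fun _ : Unit => Z))) := by
  intro hli
  have hZ0 : Z ≠ 0 := by simpa using hli.ne_zero (Sum.inr (Sum.inr ()))
  -- Z has trace zero
  have htr : Z.trace = 0 := by
    have h := hXY ⟨0, hn⟩ ⟨0, hn⟩
    rw [if_pos rfl] at h
    rw [← h, trace_sub, trace_mul_comm, sub_self]
  -- find a vector `v` with `Z *ᵥ v ∉ span {v}`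
  obtain ⟨v, hv⟩ : ∃ v : Fin r → K, Z *ᵥ v ∉ Submodule.span K {v} := by
    by_contra hcon
    push_neg at hcon
    exact hZ0 (stmt14_scalar_lemma Z htr hcon)
  have hvne : v ≠ 0 := by
    intro h
    exact hv (by rw [h, mulVec_zero]; exact Submodule.zero_mem _)
  have hZv : Z *ᵥ v ≠ 0 := fun h => hv (h ▸ Submodule.zero_mem _)
  -- `mulVec v` as a linear map in the matrix
  let μ : Matrix (Fin r) (Fin r) K →ₗ[K] (Fin r → K) :=
    { toFun := fun A => A *ᵥ v
      map_add' := fun A B => add_mulVec A B v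
      map_smul' := fun c A => smul_mulVec c A v }
  -- the evaluation linear map Φ
  let Φ : (((Fin n → K) × (Fin n → K)) × K × K) →ₗ[K] (Fin r → K) :=
    (Fintype.linearCombination K (fun i => X i *ᵥ v)) ∘ₗ
      (LinearMap.fst K (Fin n → K) (Fin n → K)) ∘ₗ
      (LinearMap.fst K ((Fin n → K) × (Fin n → K)) (K × K))
    + (Fintype.linearCombination K (fun j => Y j *ᵥ v)) ∘ₗ
      (LinearMap.snd K (Fin n → K) (Fin n → K)) ∘ₗ
      (LinearMap.fst K ((Fin n → K) × (Fin n → K)) (K × K))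
    + (LinearMap.toSpanSingleton K (Fin r → K) (Z *ᵥ v)) ∘ₗ
      (LinearMap.fst K K K) ∘ₗ
      (LinearMap.snd K ((Fin n → K) × (Fin n → K)) (K × K))
    + (LinearMap.toSpanSingleton K (Fin r → K) v) ∘ₗ
      (LinearMap.snd K K K) ∘ₗ
      (LinearMap.snd K ((Fin n → K) × (Fin n → K)) (K × K))
  have hΦ : ∀ u : ((Fin n → K) × (Fin n → K)) × K × K,
      Φ u = (∑ i, u.1.1 i • X i + ∑ j, u.1.2 j • Y j + u.2.1 • Z) *ᵥ v + u.2.2 • v := by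
    intro u
    have hμ : (∑ i, u.1.1 i • X i + ∑ j, u.1.2 j • Y j + u.2.1 • Z) *ᵥ v
        = ∑ i, u.1.1 i • (X i *ᵥ v) + ∑ j, u.1.2 j • (Y j *ᵥ v) + u.2.1 • (Z *ᵥ v) := by
      have : ∀ A : Matrix (Fin r) (Fin r) K, A *ᵥ v = μ A := fun _ => rfl
      rw [this, map_add, map_add, map_sum, map_sum]
      simp [μ, smul_mulVec]
    rw [hμ]
    simp only [Φ, LinearMap.add_apply, LinearMap.comp_apply, LinearMap.fst_apply,
      LinearMap.snd_apply, LinearMap.toSpanSingleton_apply,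
      Fintype.linearCombination_apply]
  -- kernel of Φ is big
  have hker : n + 1 ≤ finrank K (LinearMap.ker Φ) := by
    have h1 := LinearMap.finrank_range_add_finrank_ker Φ
    have h2 : finrank K (((Fin n → K) × (Fin n → K)) × K × K) = n + n + (1 + 1) := by
      simp [Module.finrank_prod]
    have h3 : finrank K (LinearMap.range Φ) ≤ r := by
      have := Submodule.finrank_le (LinearMap.range Φ)
      simpa using this
    omega
  -- the projection to the (a, b) part, restricted to ker Φ
  let g : LinearMap.ker Φ →ₗ[K] ((Fin n → K) × (Fin n → K)) :=
    (LinearMap.fst K ((Fin n → K) × (Fin n → K)) (K × K)).comp (LinearMap.ker Φ).subtype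
  have hginj : Function.Injective g := by
    rw [← LinearMap.ker_eq_bot, LinearMap.ker_eq_bot']
    rintro ⟨u, hu⟩ hgu
    have hab : u.1 = 0 := hgu
    have hΦu : Φ u = 0 := hu
    rw [hΦ u, hab] at hΦu
    simp only [Prod.fst_zero, Prod.snd_zero, Pi.zero_apply, zero_smul,
      Finset.sum_const_zero, zero_add, add_zero] at hΦu
    -- hΦu : (u.2.1 • Z) *ᵥ v + u.2.2 • v = 0
    rw [smul_mulVec] at hΦu
    have hc : u.2.1 = 0 := by
      by_contra hc0
      apply hv
      have h1 : u.2.1 • (Z *ᵥ v) = -(u.2.2 • v) := eq_neg_of_add_eq_zero_left hΦu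
      have hZv_eq : Z *ᵥ v = (-(u.2.1⁻¹ * u.2.2)) • v := by
        calc Z *ᵥ v = u.2.1⁻¹ • (u.2.1 • (Z *ᵥ v)) := by
              rw [smul_smul, inv_mul_cancel₀ hc0, one_smul]
          _ = u.2.1⁻¹ • (-(u.2.2 • v)) := by rw [h1]
          _ = (-(u.2.1⁻¹ * u.2.2)) • v := by rw [smul_neg, smul_smul, neg_smul]
      rw [hZv_eq]
      exact Submodule.smul_mem _ _ (Submodule.mem_span_singleton_self v)
    rw [hc, zero_smul, zero_add] at hΦu
    have hd : u.2.2 = 0 := by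
      by_contra hd0
      exact hvne (by
        have := congrArg (fun w => u.2.2⁻¹ • w) hΦu
        simpa [smul_smul, inv_mul_cancel₀ hd0] using this)
    exact Subtype.ext (Prod.ext hab (Prod.ext hc hd))
  -- the image of g is isotropic
  have hiso : ∀ p ∈ LinearMap.range g, ∀ q ∈ LinearMap.range g,
      p.1 ⬝ᵥ q.2 = q.1 ⬝ᵥ p.2 := by
    rintro p ⟨⟨u, hu⟩, rfl⟩ q ⟨⟨w, hw⟩, rfl⟩
    have hu' : (∑ i, u.1.1 i • X i + ∑ j, u.1.2 j • Y j + u.2.1 • Z) *ᵥ v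
        = -(u.2.2 • v) := by
      refine eq_neg_of_add_eq_zero_left ?_
      rw [← hΦ u]
      exact LinearMap.mem_ker.mp hu
    have hw' : (∑ i, w.1.1 i • X i + ∑ j, w.1.2 j • Y j + w.2.1 • Z) *ᵥ v
        = -(w.2.2 • v) := by
      refine eq_neg_of_add_eq_zero_left ?_
      rw [← hΦ w]
      exact LinearMap.mem_ker.mp hw
    set Mu := ∑ i, u.1.1 i • X i + ∑ j, u.1.2 j • Y j + u.2.1 • Z with hMu
    set Mw := ∑ i, w.1.1 i • X i + ∑ j, w.1.2 j • Y j + w.2.1 • Z with hMw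
    have t1 : Mu *ᵥ (Mw *ᵥ v) = w.2.2 • u.2.2 • v := by
      rw [hw', mulVec_neg, mulVec_smul, hu', smul_neg, neg_neg]
    have t2 : Mw *ᵥ (Mu *ᵥ v) = u.2.2 • w.2.2 • v := by
      rw [hu', mulVec_neg, mulVec_smul, hw', smul_neg, neg_neg]
    have hcalc : (u.1.1 ⬝ᵥ w.1.2 - w.1.1 ⬝ᵥ u.1.2) • (Z *ᵥ v) = 0 := by
      have hkey := stmt14_key X Y Z hXY hXX hYY hXZ hYZ
        u.1.1 u.1.2 u.2.1 w.1.1 w.1.2 w.2.1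
      rw [← hMu, ← hMw] at hkey
      have := congrArg (fun A => A *ᵥ v) hkey
      simp only [sub_mulVec, smul_mulVec] at this
      rw [← mulVec_mulVec, ← mulVec_mulVec, t1, t2, smul_comm, sub_self] at this
      exact this.symm
    have hs : u.1.1 ⬝ᵥ w.1.2 - w.1.1 ⬝ᵥ u.1.2 = 0 := by
      rcases smul_eq_zero.mp hcalc with h' | h'
      · exact h'
      · exact absurd h' hZv
    have : u.1.1 ⬝ᵥ w.1.2 = w.1.1 ⬝ᵥ u.1.2 := sub_eq_zero.mp hs
    exact this
  -- dimension count
  have hfin : finrank K (LinearMap.range g) = finrank K (LinearMap.ker Φ) :=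
    LinearMap.finrank_range_of_inj hginj
  have hbound := stmt14_iso_bound n (LinearMap.range g) hiso
  omega
end

section
/- The 3-dimensional Heisenberg Lie algebra (basis X, Y, Z with [X,Y]=Z, Z central) admits a faithful realization in 2×2 matrices with the J_{2,1}-bracket: taking X = E_{2,1}, Y = E_{1,2}, Z = E_{2,2} and J = diag(1,0), one has [X,Y]_J = Z, [X,Z]_J = 0, [Y,Z]_J = 0, and the map is injective. -/
/-- The 3-dimensional Heisenberg Lie algebra has a faithful realization in
`Mat(2,ℝ)` with the `J_{2,1}`-bracket: with `X = E_{2,1}`, `Y = E_{1,2}`,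
`Z = E_{2,2}` and `J = diag(1,0)` one has `[X,Y]_J = Z`, `[X,Z]_J = 0`,
`[Y,Z]_J = 0`, and `X, Y, Z` are linearly independent (the realization is
injective). -/
theorem stmt_15 :
    let J : Matrix (Fin 2) (Fin 2) ℝ := !![1, 0; 0, 0]
    let X : Matrix (Fin 2) (Fin 2) ℝ := !![0, 0; 1, 0]
    let Y : Matrix (Fin 2) (Fin 2) ℝ := !![0, 1; 0, 0]
    let Z : Matrix (Fin 2) (Fin 2) ℝ := !![0, 0; 0, 1]
    X * J * Y - Y * J * X = Z ∧
    X * J * Z - Z * J * X = 0 ∧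
    Y * J * Z - Z * J * Y = 0 ∧
    LinearIndependent ℝ ![X, Y, Z] := by
  intro J X Y Z
  refine ⟨?_, ?_, ?_, ?_⟩
  · ext i j; fin_cases i <;> fin_cases j <;>
      simp [J, X, Y, Z, Matrix.mul_apply, Fin.sum_univ_two]
  · ext i j; fin_cases i <;> fin_cases j <;>
      simp [J, X, Z, Matrix.mul_apply, Fin.sum_univ_two]
  · ext i j; fin_cases i <;> fin_cases j <;>
      simp [J, Y, Z, Matrix.mul_apply, Fin.sum_univ_two]
  · rw [Fintype.linearIndependent_iff]
    intro g hg i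
    have h01 := congrFun (congrFun hg 0) 1
    have h10 := congrFun (congrFun hg 1) 0
    have h11 := congrFun (congrFun hg 1) 1
    simp [X, Y, Z, Fin.sum_univ_three, Matrix.sum_apply] at h01 h10 h11
    fin_cases i <;> simpa using ‹_›
end

section
/- Define E'_{i,j}(ε) ∈ Mat(n,K) for ε ∈ K by E'_{i,j} = E_{i,j} if i,j ≤ r; ε·E_{i,j} if exactly one of i,j exceeds r; ε²·E_{i,j} if i,j > r. Then the ordinary commutator [E'_{i,j}(ε), E'_{k,l}(ε)], re-expressed in the rescaled basis, converges as ε → 0 to [E_{i,j}, E_{k,l}]_{J_{n,r}}. Hence (Mat(n,K), [·,·]_{J_{n,r}}) is a contraction of gl(n,K). -/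
open Filter Topology

/-- Scalar limit: `(c i l ε)⁻¹ · (c i j ε · c j l ε) → [j < r]` as `ε → 0`, `ε ≠ 0`. -/
private lemma stmt_16_aux (r i j l : ℕ) :
    Tendsto (fun ε : ℝ =>
      (if i < r ∧ l < r then (1:ℝ) else if r ≤ i ∧ r ≤ l then ε ^ 2 else ε)⁻¹ *
      ((if i < r ∧ j < r then (1:ℝ) else if r ≤ i ∧ r ≤ j then ε ^ 2 else ε) *
       (if j < r ∧ l < r then (1:ℝ) else if r ≤ j ∧ r ≤ l then ε ^ 2 else ε)))
      (nhdsWithin 0 {ε : ℝ | ε ≠ 0})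
      (nhds (if j < r then 1 else 0)) := by
  have hsq : Tendsto (fun ε : ℝ => ε ^ 2) (nhdsWithin 0 {ε : ℝ | ε ≠ 0}) (nhds 0) := by
    have := (continuous_pow 2).tendsto (0 : ℝ)
    simpa using this.mono_left nhdsWithin_le_nhds
  have main : Tendsto (fun ε : ℝ => if j < r then (1:ℝ) else ε ^ 2)
      (nhdsWithin 0 {ε : ℝ | ε ≠ 0}) (nhds (if j < r then 1 else 0)) := by
    by_cases hj : j < r
    · simp only [hj, if_true]; exact tendsto_const_nhds
    · simp only [hj, if_false]; exact hsq
  refine main.congr' ?_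
  filter_upwards [self_mem_nhdsWithin] with ε hε
  have hε' : (ε : ℝ) ≠ 0 := hε
  by_cases hi : i < r <;> by_cases hj : j < r <;> by_cases hl : l < r <;>
    simp only [hi, hj, hl, ← not_lt, not_true, not_false_iff, if_true, if_false,
      true_and, and_true, false_and, and_false, not_not] <;>
    field_simp <;> ring

/-- Contraction of `gl(n,ℝ)` to `(Mat(n,ℝ), [·,·]_{J_{n,r}})`: rescale the
matrix units by `φ_ε(E_{i,j}) = c(i,j,ε)·E_{i,j}` with `c = 1` if `i,j < r`,
`c = ε²` if `i,j ≥ r`, and `c = ε` otherwise.  Then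
`φ_ε⁻¹ [φ_ε E_{i,j}, φ_ε E_{k,l}]` (ordinary commutator) converges, as
`ε → 0` through nonzero values, to `[E_{i,j}, E_{k,l}]_{J_{n,r}}`. -/
theorem stmt_16 (n r : ℕ) (hn : 2 ≤ n) (hr : r ≤ n)
    (i j k l : Fin n) :
    let c : Fin n → Fin n → ℝ → ℝ := fun p q ε =>
      if (p : ℕ) < r ∧ (q : ℕ) < r then 1
      else if r ≤ (p : ℕ) ∧ r ≤ (q : ℕ) then ε ^ 2 else ε
    let φ : ℝ → Matrix (Fin n) (Fin n) ℝ → Matrix (Fin n) (Fin n) ℝ :=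
      fun ε M => Matrix.of fun p q => c p q ε * M p q
    let φinv : ℝ → Matrix (Fin n) (Fin n) ℝ → Matrix (Fin n) (Fin n) ℝ :=
      fun ε M => Matrix.of fun p q => (c p q ε)⁻¹ * M p q
    let J : Matrix (Fin n) (Fin n) ℝ :=
      Matrix.diagonal (fun p => if (p : ℕ) < r then 1 else 0)
    let E : Fin n → Fin n → Matrix (Fin n) (Fin n) ℝ :=
      fun p q => Matrix.single p q 1
    Filter.Tendsto
      (fun ε => φinv ε (φ ε (E i j) * φ ε (E k l) - φ ε (E k l) * φ ε (E i j)))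
      (nhdsWithin 0 {ε : ℝ | ε ≠ 0})
      (nhds (E i j * J * E k l - E k l * J * E i j)) := by
  intro c φ φinv J E
  -- φ acts on a matrix unit by a scalar
  have hφ : ∀ (ε : ℝ) (p q : Fin n), φ ε (E p q) = c p q ε • E p q := by
    intro ε p q
    ext a b
    by_cases h : p = a ∧ q = b
    · obtain ⟨rfl, rfl⟩ := h
      simp [φ, E, Matrix.single]
    · have h1 : Matrix.single p q (1:ℝ) a b = 0 := by
        simp [Matrix.single, h]
      simp [φ, E, Matrix.smul_apply, h1]
  -- φinv acts on a scaled matrix unit by a scalar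
  have hφinvE : ∀ (ε : ℝ) (t : ℝ) (p q : Fin n),
      φinv ε (t • E p q) = ((c p q ε)⁻¹ * t) • E p q := by
    intro ε t p q
    ext a b
    by_cases h : p = a ∧ q = b
    · obtain ⟨rfl, rfl⟩ := h
      simp [φinv, E, Matrix.single, mul_comm, mul_assoc, mul_left_comm]
    · have h1 : Matrix.single p q (1:ℝ) a b = 0 := by
        simp [Matrix.single, h]
      have ht : Matrix.single p q t a b = 0 := by
        simp [Matrix.single, h]
      simp [φinv, E, Matrix.smul_apply, h1, ht]
  have hφinv0 : ∀ ε : ℝ, φinv ε (0 : Matrix (Fin n) (Fin n) ℝ) = 0 := by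
    intro ε; ext a b; simp [φinv]
  have hφinv_sub : ∀ (ε : ℝ) (A B : Matrix (Fin n) (Fin n) ℝ),
      φinv ε (A - B) = φinv ε A - φinv ε B := by
    intro ε A B
    ext a b
    simp [φinv, mul_sub]
  -- products of matrix units
  have hmulE : ∀ (a b a' b' : Fin n),
      E a b * E a' b' = if b = a' then E a b' else 0 := by
    intro a b a' b'
    by_cases h : b = a'
    · subst h
      simp [E, Matrix.single_mul_single_same]
    · simp [E, Matrix.single_mul_single_of_ne (h := h) (d := (1:ℝ)) (c := (1:ℝ)), h]
  -- E p q * J = [q < r] • E p q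
  have hEJ : ∀ (p q : Fin n),
      E p q * J = (if (q : ℕ) < r then (1:ℝ) else 0) • E p q := by
    intro p q
    ext a b
    rw [Matrix.mul_diagonal]
    by_cases h : p = a ∧ q = b
    · obtain ⟨rfl, rfl⟩ := h
      simp [E, Matrix.single, mul_comm]
    · have h1 : Matrix.single p q (1:ℝ) a b = 0 := by
        simp [Matrix.single, h]
      simp [E, Matrix.smul_apply, h1]
  -- rewrite the target
  have htarget : E i j * J * E k l - E k l * J * E i j
      = (if (j : ℕ) < r then (1:ℝ) else 0) • (E i j * E k l)
        - (if (l : ℕ) < r then (1:ℝ) else 0) • (E k l * E i j) := by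
    rw [hEJ i j, hEJ k l, smul_mul_assoc, smul_mul_assoc]
  -- rewrite the function
  have key : ∀ ε : ℝ,
      φinv ε (φ ε (E i j) * φ ε (E k l) - φ ε (E k l) * φ ε (E i j))
      = ((c i l ε)⁻¹ * (c i j ε * c k l ε)) • (E i j * E k l)
        - ((c k j ε)⁻¹ * (c i j ε * c k l ε)) • (E k l * E i j) := by
    intro ε
    rw [hφ ε i j, hφ ε k l, smul_mul_smul_comm, smul_mul_smul_comm, hφinv_sub]
    congr 1
    · by_cases hjk : j = k
      · subst hjk
        rw [hmulE i j j l, if_pos rfl, hφinvE]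
      · rw [hmulE i j k l, if_neg hjk, smul_zero, smul_zero, hφinv0]
    · by_cases hli : l = i
      · subst hli
        rw [hmulE k l l j, if_pos rfl, hφinvE, mul_comm (c k l ε) (c l j ε)]
      · rw [hmulE k l i j, if_neg hli, smul_zero, smul_zero, hφinv0]
  rw [htarget]
  refine Tendsto.congr (fun ε => (key ε).symm) (Tendsto.sub ?_ ?_)
  · by_cases hjk : j = k
    · subst hjk
      have h1 : Tendsto (fun ε : ℝ => (c i l ε)⁻¹ * (c i j ε * c j l ε))
          (nhdsWithin 0 {ε : ℝ | ε ≠ 0})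
          (nhds (if (j : ℕ) < r then 1 else 0)) := by
        refine (stmt_16_aux r i j l).congr fun ε => ?_
        simp only [c]
      exact h1.smul_const _
    · have hA : E i j * E k l = 0 := by rw [hmulE, if_neg hjk]
      rw [hA]
      simp only [smul_zero]
      exact tendsto_const_nhds
  · by_cases hli : l = i
    · subst hli
      have h2 : Tendsto (fun ε : ℝ => (c k j ε)⁻¹ * (c l j ε * c k l ε))
          (nhdsWithin 0 {ε : ℝ | ε ≠ 0})
          (nhds (if (l : ℕ) < r then 1 else 0)) := by
        refine (stmt_16_aux r (k : ℕ) (l : ℕ) (j : ℕ)).congr fun ε => ?_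
        simp only [c]
        ring
      exact h2.smul_const _
    · have hB : E k l * E i j = 0 := by rw [hmulE, if_neg hli]
      rw [hB]
      simp only [smul_zero]
      exact tendsto_const_nhds
end
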